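/- Let S, S̃ be finite random variables with joint distribution p_{S,S̃}, let ρ = min_s p_S(s) > 0, and suppose Σ_{s̃} min_s p_{S̃|S}(s̃|s) < 1 - e⁻¹. Then I(S;S̃) > ρ²/(2e²). -/

import Mathlib

open Real

noncomputable def phiF : ℝ → ℝ := fun x => Real.log x - 3*((x-1)*(x+5)) / (2*(x+2)^2)
noncomputable def gF : ℝ → ℝ := fun x => x * Real.log x - x + 1 - 3*(x-1)^2 / (2*(x+2))

lemma hasDerivAt_phiF {x : ℝ} (hx : 0 < x) :
    HasDerivAt phiF (1/x - 27/(x+2)^3) x := by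
  have h1 : HasDerivAt Real.log x⁻¹ x := Real.hasDerivAt_log hx.ne'
  have h2 : HasDerivAt (fun y : ℝ => 3*((y-1)*(y+5))) (3*(1*(x+5) + (x-1)*1)) x := by
    simpa using (((hasDerivAt_id x).sub_const 1).mul ((hasDerivAt_id x).add_const 5)).const_mul 3
  have h3 : HasDerivAt (fun y : ℝ => 2*(y+2)^2) (2*(2*(x+2)^1*1)) x := by
    simpa using (((hasDerivAt_id x).add_const 2).pow 2).const_mul 2
  have hden : 2*(x+2)^2 ≠ 0 := by positivity
  have h4 := h2.div h3 hden
  have := h1.sub h4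
  refine this.congr_deriv ?_
  have hx2 : (x+2) ≠ 0 := by positivity
  field_simp
  ring

lemma hasDerivAt_gF {x : ℝ} (hx : 0 < x) : HasDerivAt gF (phiF x) x := by
  have h1 : HasDerivAt (fun y : ℝ => y * Real.log y) (1 * Real.log x + x * x⁻¹) x := by
    exact (hasDerivAt_id' x).mul (Real.hasDerivAt_log hx.ne')
  have h2 : HasDerivAt (fun y : ℝ => 3*(y-1)^2) (3*(2*(x-1)^1*1)) x := by
    simpa using (((hasDerivAt_id x).sub_const 1).pow 2).const_mul 3
  have h3 : HasDerivAt (fun y : ℝ => 2*(y+2)) (2*1) x := by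
    simpa using ((hasDerivAt_id x).add_const 2).const_mul 2
  have hden : 2*(x+2) ≠ 0 := by positivity
  have h4 := h2.div h3 hden
  have := ((h1.sub (hasDerivAt_id x)).add_const 1).sub h4
  refine this.congr_deriv ?_
  have hx2 : (x+2) ≠ 0 := by positivity
  unfold phiF
  field_simp
  ring

lemma cube_aux {y : ℝ} (hy : 0 < y) : 27/(y+2)^3 ≤ 1/y := by
  rw [div_le_div_iff₀ (by positivity) hy]
  nlinarith [sq_nonneg (y-1), hy.le]

lemma phiF_one : phiF 1 = 0 := by unfold phiF; norm_num

lemma phiF_nonneg {x : ℝ} (hx : 1 ≤ x) : 0 ≤ phiF x := by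
  have mono : MonotoneOn phiF (Set.Icc 1 x) := by
    apply monotoneOn_of_hasDerivWithinAt_nonneg (convex_Icc 1 x)
      (f' := fun y => 1/y - 27/(y+2)^3)
    · intro y hy
      exact (hasDerivAt_phiF (lt_of_lt_of_le one_pos hy.1)).continuousAt.continuousWithinAt
    · intro y hy
      rw [interior_Icc] at hy
      exact (hasDerivAt_phiF (lt_trans one_pos hy.1)).hasDerivWithinAt
    · intro y hy
      rw [interior_Icc] at hy
      have := cube_aux (lt_trans one_pos hy.1)
      linarith
  have := mono (Set.left_mem_Icc.2 hx) (Set.right_mem_Icc.2 hx) hx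
  rwa [phiF_one] at this

lemma phiF_nonpos {x : ℝ} (hx0 : 0 < x) (hx : x ≤ 1) : phiF x ≤ 0 := by
  have mono : MonotoneOn phiF (Set.Icc x 1) := by
    apply monotoneOn_of_hasDerivWithinAt_nonneg (convex_Icc x 1)
      (f' := fun y => 1/y - 27/(y+2)^3)
    · intro y hy
      exact (hasDerivAt_phiF (lt_of_lt_of_le hx0 hy.1)).continuousAt.continuousWithinAt
    · intro y hy
      rw [interior_Icc] at hy
      exact (hasDerivAt_phiF (lt_trans hx0 hy.1)).hasDerivWithinAt
    · intro y hy
      rw [interior_Icc] at hy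
      have := cube_aux (lt_trans hx0 hy.1)
      linarith
  have := mono (Set.left_mem_Icc.2 hx) (Set.right_mem_Icc.2 hx) hx
  rwa [phiF_one] at this

lemma gF_one : gF 1 = 0 := by unfold gF; norm_num

lemma gF_nonneg {x : ℝ} (hx : 0 ≤ x) : 0 ≤ gF x := by
  rcases eq_or_lt_of_le hx with h0 | h0
  · unfold gF; rw [← h0]; norm_num
  rcases le_total 1 x with h1 | h1
  · have mono : MonotoneOn gF (Set.Icc 1 x) := by
      apply monotoneOn_of_hasDerivWithinAt_nonneg (convex_Icc 1 x) (f' := phiF)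
      · intro y hy
        exact (hasDerivAt_gF (lt_of_lt_of_le one_pos hy.1)).continuousAt.continuousWithinAt
      · intro y hy
        rw [interior_Icc] at hy
        exact (hasDerivAt_gF (lt_trans one_pos hy.1)).hasDerivWithinAt
      · intro y hy
        rw [interior_Icc] at hy
        exact phiF_nonneg hy.1.le
    have := mono (Set.left_mem_Icc.2 h1) (Set.right_mem_Icc.2 h1) h1
    rwa [gF_one] at this
  · have anti : AntitoneOn gF (Set.Icc x 1) := by
      apply antitoneOn_of_hasDerivWithinAt_nonpos (convex_Icc x 1) (f' := phiF)
      · intro y hy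
        exact (hasDerivAt_gF (lt_of_lt_of_le h0 hy.1)).continuousAt.continuousWithinAt
      · intro y hy
        rw [interior_Icc] at hy
        exact (hasDerivAt_gF (lt_trans h0 hy.1)).hasDerivWithinAt
      · intro y hy
        rw [interior_Icc] at hy
        exact phiF_nonpos (lt_trans h0 hy.1) hy.2.le
    have := anti (Set.left_mem_Icc.2 h1) (Set.right_mem_Icc.2 h1) h1
    rwa [gF_one] at this

/-- pointwise Pinsker-type bound -/
lemma key_log_ineq {x : ℝ} (hx : 0 ≤ x) :
    3*(x-1)^2 / (2*(x+2)) ≤ x * Real.log x - x + 1 := by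
  have := gF_nonneg hx
  unfold gF at this
  linarith

lemma pq_ineq {p q : ℝ} (hp : 0 ≤ p) (hq : 0 < q)
    (hkey : 3*(p/q-1)^2 / (2*(p/q+2)) ≤ (p/q) * Real.log (p/q) - (p/q) + 1) :
    3*(p-q)^2 / (2*(p+2*q)) ≤ p * Real.log (p/q) - p + q := by
  have hq' : q ≠ 0 := hq.ne'
  have h := mul_le_mul_of_nonneg_left hkey hq.le
  have e1 : q * ((p/q) * Real.log (p/q) - (p/q) + 1) = p * Real.log (p/q) - p + q := by
    field_simp
  have h3 : p/q + 2 ≠ 0 := by positivity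
  have h4 : p + 2*q ≠ 0 := by positivity
  have e2 : q * (3*(p/q-1)^2 / (2*(p/q+2))) = 3*(p-q)^2 / (2*(p+2*q)) := by
    field_simp
  rw [e1, e2] at h
  exact h

open Real in
/-- If the sum over `t` of the columnwise minimum of the channel `W` is below
`1 - e⁻¹`, then the mutual information `I(S; S̃)` (in nats) exceeds `ρ²/(2e²)`,
where `ρ` is the minimum state probability. -/
theorem mutualInfo_gt_of_min_sum_lt {S T : Type*} [Fintype S] [Fintype T]
    [Nonempty S]
    (pS : S → ℝ) (hpSnn : ∀ s, 0 < pS s) (hpSsum : ∑ s, pS s = 1)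
    (W : S → T → ℝ) (hWnn : ∀ s t, 0 ≤ W s t) (hWsum : ∀ s, ∑ t, W s t = 1)
    (hmin : ∑ t, Finset.univ.inf' Finset.univ_nonempty (fun s => W s t)
        < 1 - (Real.exp 1)⁻¹) :
    ((Finset.univ.inf' Finset.univ_nonempty pS) ^ 2) / (2 * Real.exp 1 ^ 2) <
      ∑ s, ∑ t, pS s * W s t *
        Real.log (W s t / (∑ s', pS s' * W s' t)) := by
  classical
  set ρ := Finset.univ.inf' Finset.univ_nonempty pS with hρdef
  obtain ⟨s₀, -, hs₀⟩ := Finset.exists_mem_eq_inf' Finset.univ_nonempty pS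
  have hρpos : 0 < ρ := by rw [hρdef, hs₀]; exact hpSnn s₀
  set q : T → ℝ := fun t => ∑ s', pS s' * W s' t with hqdef
  have hq_nn : ∀ t, 0 ≤ q t := fun t =>
    Finset.sum_nonneg fun s' _ => mul_nonneg (hpSnn s').le (hWnn s' t)
  have hq_sum : ∑ t, q t = 1 := by
    simp only [hqdef]
    rw [Finset.sum_comm]
    simp_rw [← Finset.mul_sum]
    simp [hWsum, hpSsum]
  have hq_zero : ∀ s t, q t = 0 → W s t = 0 := by
    intro s t h0
    by_contra hW
    have hWpos : 0 < W s t := lt_of_le_of_ne (hWnn s t) (Ne.symm hW)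
    have hle : pS s * W s t ≤ q t := by
      simp only [hqdef]
      exact Finset.single_le_sum
        (fun s' _ => mul_nonneg (hpSnn s').le (hWnn s' t)) (Finset.mem_univ s)
    nlinarith [mul_pos (hpSnn s) hWpos]
  set m : T → ℝ := fun t => Finset.univ.inf' Finset.univ_nonempty (fun s => W s t)
    with hmdef
  have hm_le : ∀ s t, m t ≤ W s t := by
    intro s t
    simp only [hmdef]
    exact Finset.inf'_le _ (Finset.mem_univ s)
  have hm_le_q : ∀ t, m t ≤ q t := by
    intro t
    calc m t = (∑ s', pS s') * m t := by rw [hpSsum, one_mul]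
    _ = ∑ s', pS s' * m t := by rw [Finset.sum_mul]
    _ ≤ ∑ s', pS s' * W s' t := Finset.sum_le_sum fun s' _ =>
        mul_le_mul_of_nonneg_left (hm_le s' t) (hpSnn s').le
    _ = q t := by simp only [hqdef]
  set d : S → ℝ := fun s => ∑ t, |W s t - q t| with hddef
  have hd_nn : ∀ s, 0 ≤ d s := fun s => Finset.sum_nonneg fun t _ => abs_nonneg _
  -- Step A: per-state Pinsker inequality
  have stepA : ∀ s, (d s)^2 / 2 ≤ ∑ t, W s t * Real.log (W s t / q t) := by
    intro s
    have hsum_eq : ∑ t, (W s t * Real.log (W s t / q t) - W s t + q t)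
        = ∑ t, W s t * Real.log (W s t / q t) := by
      rw [Finset.sum_add_distrib, Finset.sum_sub_distrib, hWsum s, hq_sum]
      ring
    have hterm : ∀ t, 3*(W s t - q t)^2 / (2*(W s t + 2 * q t))
        ≤ W s t * Real.log (W s t / q t) - W s t + q t := by
      intro t
      rcases eq_or_lt_of_le (hq_nn t) with h0 | h0
      · have hW0 := hq_zero s t h0.symm
        rw [hW0, ← h0]
        norm_num
      · exact pq_ineq (hWnn s t) h0 (key_log_ineq (div_nonneg (hWnn s t) h0.le))
    have hCS : (d s)^2 ≤ (∑ t, (W s t - q t)^2 / (W s t + 2 * q t))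
        * ∑ t, (W s t + 2 * q t) := by
      simp only [hddef]
      apply Finset.sum_sq_le_sum_mul_sum_of_sq_eq_mul
      · intro t _
        have h1 := hWnn s t; have h2 := hq_nn t
        positivity
      · intro t _
        have h1 := hWnn s t; have h2 := hq_nn t
        positivity
      · intro t _
        rcases eq_or_ne (W s t + 2 * q t) 0 with hz | hz
        · have h1 : W s t = 0 := by nlinarith [hWnn s t, hq_nn t]
          have h2 : q t = 0 := by nlinarith [hWnn s t, hq_nn t]
          simp [h1, h2]
        · rw [sq_abs, div_mul_cancel₀ _ hz]
    have hsum3 : ∑ t, (W s t + 2 * q t) = 3 := by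
      rw [Finset.sum_add_distrib, hWsum s, ← Finset.mul_sum, hq_sum]
      norm_num
    rw [hsum3] at hCS
    calc (d s)^2/2 ≤ (3/2) * ∑ t, (W s t - q t)^2 / (W s t + 2 * q t) := by
          nlinarith [hCS]
    _ = ∑ t, 3*(W s t - q t)^2 / (2*(W s t + 2 * q t)) := by
        rw [Finset.mul_sum]
        exact Finset.sum_congr rfl fun t _ => div_mul_div_comm (3:ℝ) 2 _ _
    _ ≤ ∑ t, (W s t * Real.log (W s t / q t) - W s t + q t) :=
        Finset.sum_le_sum fun t _ => hterm t
    _ = ∑ t, W s t * Real.log (W s t / q t) := hsum_eq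
  -- Step B: Jensen via Cauchy-Schwarz over s
  have stepB : (∑ s, pS s * d s)^2 ≤ ∑ s, pS s * (d s)^2 := by
    have h := Finset.sum_sq_le_sum_mul_sum_of_sq_eq_mul Finset.univ
      (r := fun s => pS s * d s) (f := fun s => pS s * (d s)^2) (g := fun s => pS s)
      (fun s _ => mul_nonneg (hpSnn s).le (sq_nonneg _)) (fun s _ => (hpSnn s).le)
      (fun s _ => by ring)
    rwa [hpSsum, mul_one] at h
  -- Step C: lower bound on the average total variation
  have stepC : ρ * (1 - ∑ t, m t) ≤ ∑ s, pS s * d s := by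
    have h1 : ∀ t, ρ * (q t - m t) ≤ ∑ s, pS s * |W s t - q t| := by
      intro t
      obtain ⟨σ, -, hσ⟩ := Finset.exists_mem_eq_inf' Finset.univ_nonempty
        (fun s => W s t)
      have hmtW : m t = W σ t := by simp only [hmdef]; exact hσ
      have habs : |W σ t - q t| = q t - m t := by
        rw [abs_of_nonpos (by linarith [hm_le_q t, hmtW ▸ (le_refl (m t))] : W σ t - q t ≤ 0)]
        rw [hmtW]
        ring
      have hρσ : ρ ≤ pS σ := by rw [hρdef]; exact Finset.inf'_le _ (Finset.mem_univ σ)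
      calc ρ * (q t - m t) ≤ pS σ * (q t - m t) :=
          mul_le_mul_of_nonneg_right hρσ (by linarith [hm_le_q t])
      _ = pS σ * |W σ t - q t| := by rw [habs]
      _ ≤ ∑ s, pS s * |W s t - q t| := Finset.single_le_sum
          (f := fun s => pS s * |W s t - q t|)
          (fun s _ => mul_nonneg (hpSnn s).le (abs_nonneg _)) (Finset.mem_univ σ)
    have e1 : ∑ t, ρ * (q t - m t) = ρ * (1 - ∑ t, m t) := by
      rw [← Finset.mul_sum, Finset.sum_sub_distrib, hq_sum]
    have e2 : ∑ t, ∑ s, pS s * |W s t - q t| = ∑ s, pS s * d s := by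
      rw [Finset.sum_comm]
      refine Finset.sum_congr rfl fun s _ => ?_
      simp only [hddef]
      rw [Finset.mul_sum]
    rw [← e1, ← e2]
    exact Finset.sum_le_sum fun t _ => h1 t
  -- convert the goal
  have hgoal_eq : (∑ s, ∑ t, pS s * W s t *
        Real.log (W s t / (∑ s', pS s' * W s' t)))
      = ∑ s, pS s * ∑ t, W s t * Real.log (W s t / q t) := by
    simp only [hqdef, Finset.mul_sum, mul_assoc]
  rw [hgoal_eq]
  have hI : ∑ s, pS s * ((d s)^2/2) ≤ ∑ s, pS s * ∑ t, W s t * Real.log (W s t / q t) :=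
    Finset.sum_le_sum fun s _ => mul_le_mul_of_nonneg_left (stepA s) (hpSnn s).le
  have h2 : (∑ s, pS s * d s)^2 / 2 ≤ ∑ s, pS s * ((d s)^2/2) := by
    have he : ∑ s, pS s * ((d s)^2/2) = (∑ s, pS s * (d s)^2)/2 := by
      rw [Finset.sum_div]
      exact Finset.sum_congr rfl fun s _ => (mul_div_assoc _ _ _).symm
    rw [he]
    linarith [stepB]
  have hmin' : (Real.exp 1)⁻¹ < 1 - ∑ t, m t := by
    simp only [hmdef]
    linarith [hmin]
  have hBC : ρ * (Real.exp 1)⁻¹ < ρ * (1 - ∑ t, m t) :=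
    mul_lt_mul_of_pos_left hmin' hρpos
  have hCpos : 0 < ρ * (Real.exp 1)⁻¹ := by positivity
  have hAB : ρ * (Real.exp 1)⁻¹ < ∑ s, pS s * d s := lt_of_lt_of_le hBC stepC
  have hsq : (ρ * (Real.exp 1)⁻¹)^2 < (∑ s, pS s * d s)^2 := by
    rw [pow_two, pow_two]
    exact mul_self_lt_mul_self hCpos.le hAB
  have hfin : ρ^2/(2*Real.exp 1^2) = (ρ * (Real.exp 1)⁻¹)^2/2 := by
    have he : Real.exp 1 ≠ 0 := (Real.exp_pos 1).ne'
    field_simp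
  rw [hfin]
  calc (ρ * (Real.exp 1)⁻¹)^2/2 < (∑ s, pS s * d s)^2/2 := by linarith
  _ ≤ ∑ s, pS s * ((d s)^2/2) := h2
  _ ≤ _ := hI
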